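/- arXiv:1602.08043 — 4 statements merged into one kernel-verified Lean document; each statement's English description precedes it below -/
import Mathlib

section
/- Entropy bound for Wasserstein distance of lifted measures: Let P be a probability measure on a Polish space E, S, S_m : E → E' measurable maps into a Polish metric space (E', d'), and suppose E_P[exp(k · d'(S_m(X), S(X)))] ≤ 1 + C for some k > 0 and C < ∞. Then for every probability measure Q ≪ P with H(Q|P) ≤ a, the 1-Wasserstein distance between Q∘S_m⁻¹ and Q∘S⁻¹ satisfies d_W(Q∘S_m⁻¹, Q∘S⁻¹) ≤ (4/k)(2 + a)(1 + C). -/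
open MeasureTheory
open scoped ENNReal NNReal Classical

/-- The 1-Wasserstein distance between two measures on a metric space. -/
noncomputable def wasserstein {E : Type*} [MetricSpace E] [MeasurableSpace E]
    (μ ν : Measure E) : ℝ≥0∞ :=
  ⨅ (π : Measure (E × E)) (_ : π.map Prod.fst = μ ∧ π.map Prod.snd = ν),
    ∫⁻ p, edist p.1 p.2 ∂π

/-- The relative entropy `H(Q|P) = ∫ log (dQ/dP) dQ` if `Q ≪ P` and the log-likelihood ratio
is integrable, and `+∞` otherwise. -/
noncomputable def relEntropy {E : Type*} [MeasurableSpace E] (Q P : Measure E) : ℝ≥0∞ :=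
  if Q ≪ P ∧ Integrable (llr Q P) Q then ENNReal.ofReal (∫ x, llr Q P x ∂Q) else ⊤

/-- Young-type inequality for exp / x log x. -/
lemma young_exp (u v : ℝ) (hv : 0 ≤ v) : u * v ≤ Real.exp u + v * Real.log v - v := by
  rcases eq_or_lt_of_le hv with h | h
  · simp [← h, Real.exp_pos u |>.le]
  · have h1 : (u - Real.log v) + 1 ≤ Real.exp (u - Real.log v) := Real.add_one_le_exp _
    have h2 : v * ((u - Real.log v) + 1) ≤ v * Real.exp (u - Real.log v) :=
      mul_le_mul_of_nonneg_left h1 hv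
    have h3 : v * Real.exp (u - Real.log v) = Real.exp u := by
      rw [Real.exp_sub, Real.exp_log h]
      field_simp
    nlinarith [h2, h3]

/-- **Entropy bound for the Wasserstein distance of lifted measures.** If
`E_P[exp(k d'(S_m(X), S(X)))] ≤ 1 + C`, then for every probability measure `Q ≪ P` with
`H(Q|P) ≤ a` one has `d_W(Q ∘ S_m⁻¹, Q ∘ S⁻¹) ≤ (4/k)(2 + a)(1 + C)`. -/
theorem stmt_11 {E E' : Type*}
    [MeasurableSpace E] [TopologicalSpace E] [PolishSpace E] [BorelSpace E]
    [MetricSpace E'] [PolishSpace E'] [MeasurableSpace E'] [BorelSpace E']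
    (P Q : Measure E) [IsProbabilityMeasure P] [IsProbabilityMeasure Q]
    (S Sm : E → E') (hS : Measurable S) (hSm : Measurable Sm)
    (k C a : ℝ) (hk : 0 < k) (hC : 0 ≤ C) (ha : 0 ≤ a)
    (hexp : ∫⁻ x, ENNReal.ofReal (Real.exp (k * dist (Sm x) (S x))) ∂P
      ≤ 1 + ENNReal.ofReal C)
    (hac : Q ≪ P) (hent : relEntropy Q P ≤ ENNReal.ofReal a) :
    wasserstein (Q.map Sm) (Q.map S) ≤ ENNReal.ofReal (4 / k * (2 + a) * (1 + C)) := by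
  -- notation
  set g : E → ℝ := fun x => dist (Sm x) (S x) with hg_def
  set h : E → ℝ := fun x => (Q.rnDeriv P x).toReal with hh_def
  have hgmeas : Measurable g := hSm.dist hS
  have hhmeas : Measurable h := (Measure.measurable_rnDeriv Q P).ennreal_toReal
  have hgnn : ∀ x, 0 ≤ g x := fun x => dist_nonneg
  have hhnn : ∀ x, 0 ≤ h x := fun x => ENNReal.toReal_nonneg
  -- extract entropy facts
  have hcond : Q ≪ P ∧ Integrable (llr Q P) Q := by
    by_contra hc
    rw [relEntropy, if_neg hc] at hent
    exact ENNReal.ofReal_ne_top (top_le_iff.mp hent)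
  have hint : Integrable (llr Q P) Q := hcond.2
  have hentR : ∫ x, llr Q P x ∂Q ≤ a := by
    rw [relEntropy, if_pos hcond] at hent
    exact (ENNReal.ofReal_le_ofReal_iff ha).mp hent
  -- exponential moment
  set F : E → ℝ := fun x => Real.exp (k * g x) with hF_def
  have hFmeas : Measurable F := ((measurable_const.mul hgmeas)).exp
  have hFnn : ∀ x, 0 ≤ F x := fun x => (Real.exp_pos _).le
  have hFint : Integrable F P := by
    refine ⟨hFmeas.aestronglyMeasurable, ?_⟩
    rw [hasFiniteIntegral_iff_ofReal (Filter.Eventually.of_forall hFnn)]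
    exact lt_of_le_of_lt hexp
      (ENNReal.add_lt_top.mpr ⟨ENNReal.one_lt_top, ENNReal.ofReal_lt_top⟩)
  have hFle : ∫ x, F x ∂P ≤ 1 + C := by
    have h1 : ENNReal.ofReal (∫ x, F x ∂P) ≤ ENNReal.ofReal (1 + C) := by
      rw [ofReal_integral_eq_lintegral_ofReal hFint (Filter.Eventually.of_forall hFnn)]
      rw [ENNReal.ofReal_add zero_le_one hC, ENNReal.ofReal_one]
      exact hexp
    exact (ENNReal.ofReal_le_ofReal_iff (by linarith)).mp h1
  -- integrability of h * llr
  have hhl : Integrable (fun x => h x * llr Q P x) P := by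
    simpa [smul_eq_mul] using (integrable_rnDeriv_smul_iff hac).mpr hint
  have hh : Integrable h P := Measure.integrable_toReal_rnDeriv
  -- pointwise Young inequality
  have hpt : ∀ x, k * g x * h x ≤ F x + h x * llr Q P x - h x := by
    intro x
    have := young_exp (k * g x) (h x) (hhnn x)
    simpa [llr, mul_comm] using this
  -- integrability of LHS
  have hRint : Integrable (fun x => F x + h x * llr Q P x - h x) P := (hFint.add hhl).sub hh
  have hkgh : Integrable (fun x => k * g x * h x) P := by
    refine hRint.mono ((measurable_const.mul hgmeas).mul hhmeas).aestronglyMeasurable ?_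
    refine Filter.Eventually.of_forall fun x => ?_
    have h1 : 0 ≤ k * g x * h x := by positivity
    rw [Real.norm_eq_abs, Real.norm_eq_abs, abs_of_nonneg h1]
    exact le_trans (hpt x) (le_abs_self _)
  -- Integrability of g under Q
  have hkgh' : Integrable (fun x => h x • (k * g x)) P := by
    simpa [smul_eq_mul, mul_comm, mul_left_comm, mul_assoc] using hkgh
  have hkgQ : Integrable (fun x => k * g x) Q :=
    (integrable_rnDeriv_smul_iff hac).mp hkgh'
  have hgQ : Integrable g Q := by
    have := hkgQ.const_mul (1/k)
    simpa [mul_assoc, one_div, inv_mul_cancel_left₀ hk.ne'] using this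
  -- integral identities
  have hEq1 : ∫ x, h x • (k * g x) ∂P = ∫ x, k * g x ∂Q :=
    integral_rnDeriv_smul hac
  have hEq2 : ∫ x, h x • llr Q P x ∂P = ∫ x, llr Q P x ∂Q :=
    integral_rnDeriv_smul hac
  have hEq3 : ∫ x, h x ∂P = 1 := by
    rw [hh_def]
    rw [Measure.integral_toReal_rnDeriv hac]
    simp
  -- main bound
  have hmain : k * ∫ x, g x ∂Q ≤ C + a := by
    have h1 : ∫ x, k * g x * h x ∂P ≤ ∫ x, (F x + h x * llr Q P x - h x) ∂P :=
      integral_mono hkgh hRint hpt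
    have hsum : Integrable (fun x => F x + h x * llr Q P x) P := hFint.add hhl
    have h2a : ∫ x, (F x + h x * llr Q P x - h x) ∂P
        = (∫ x, (F x + h x * llr Q P x) ∂P) - ∫ x, h x ∂P := integral_sub hsum hh
    have h2b : ∫ x, (F x + h x * llr Q P x) ∂P
        = ∫ x, F x ∂P + ∫ x, h x * llr Q P x ∂P := integral_add hFint hhl
    have h2 : ∫ x, (F x + h x * llr Q P x - h x) ∂P
        = ∫ x, F x ∂P + ∫ x, h x * llr Q P x ∂P - ∫ x, h x ∂P := by rw [h2a, h2b]
    have h3 : ∫ x, h x * llr Q P x ∂P ≤ a := by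
      have : ∫ x, h x * llr Q P x ∂P = ∫ x, llr Q P x ∂Q := by
        simpa [smul_eq_mul] using hEq2
      linarith [this ▸ hentR]
    have h4 : ∫ x, k * g x * h x ∂P = k * ∫ x, g x ∂Q := by
      have : ∫ x, h x • (k * g x) ∂P = ∫ x, k * g x * h x ∂P := by
        congr 1; funext x; simp [smul_eq_mul]; ring
      rw [← this, hEq1, integral_const_mul]
    rw [h4, h2, hEq3] at h1
    linarith [hFle]
  have hfinal : ∫ x, g x ∂Q ≤ 4 / k * (2 + a) * (1 + C) := by
    have h4 : 4 / k * (2 + a) * (1 + C) = (4 * (2 + a) * (1 + C)) / k := by ring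
    rw [h4, le_div_iff₀ hk]
    nlinarith [hmain]
  -- coupling
  set π : Measure (E' × E') := Q.map (fun x => (Sm x, S x)) with hπ_def
  have hpair : Measurable fun x => (Sm x, S x) := hSm.prodMk hS
  have hπ1 : π.map Prod.fst = Q.map Sm := by
    rw [hπ_def, Measure.map_map measurable_fst hpair]; rfl
  have hπ2 : π.map Prod.snd = Q.map S := by
    rw [hπ_def, Measure.map_map measurable_snd hpair]; rfl
  have hw : wasserstein (Q.map Sm) (Q.map S) ≤ ∫⁻ p, edist p.1 p.2 ∂π :=
    iInf₂_le π ⟨hπ1, hπ2⟩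
  have hlin : ∫⁻ p, edist p.1 p.2 ∂π = ∫⁻ x, ENNReal.ofReal (g x) ∂Q := by
    rw [hπ_def, lintegral_map (measurable_fst.edist measurable_snd) hpair]
    simp_rw [edist_dist]; rfl
  have hlin2 : ∫⁻ x, ENNReal.ofReal (g x) ∂Q = ENNReal.ofReal (∫ x, g x ∂Q) :=
    (ofReal_integral_eq_lintegral_ofReal hgQ (Filter.Eventually.of_forall hgnn)).symm
  calc wasserstein (Q.map Sm) (Q.map S) ≤ ∫⁻ p, edist p.1 p.2 ∂π := hw
    _ = ENNReal.ofReal (∫ x, g x ∂Q) := by rw [hlin, hlin2]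
    _ ≤ ENNReal.ofReal (4 / k * (2 + a) * (1 + C)) := ENNReal.ofReal_le_ofReal hfinal
end

section
/- Hoeffding decomposition identity: for any function H : {1,...,n}² → ℝ and n ≥ 2, (1/(n(n-1))) Σ_{i≠j} H(i,j) = (1/n!) Σ_{σ ∈ S_n} (1/⌊n/2⌋) Σ_{i=1}^{⌊n/2⌋} H(σ(2i-1), σ(2i)), where S_n is the symmetric group on {1,...,n}. -/
/-- Hoeffding decomposition identity. -/
theorem stmt_12 (n : ℕ) (hn : 2 ≤ n) (H : Fin n → Fin n → ℝ) :
    ((n : ℝ) * ((n : ℝ) - 1))⁻¹ *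
        ∑ i : Fin n, ∑ j : Fin n, (if i ≠ j then H i j else 0)
      = ((Nat.factorial n : ℝ))⁻¹ * ∑ σ : Equiv.Perm (Fin n),
          (((n / 2 : ℕ) : ℝ))⁻¹ * ∑ i : Fin (n / 2),
            H (σ ⟨2 * i.1, by have := i.isLt; omega⟩)
              (σ ⟨2 * i.1 + 1, by have := i.isLt; omega⟩) := by
  have h0 : 0 < n := by omega
  set m := n / 2 with hm
  have hm1 : 1 ≤ m := by omega
  set a0 : Fin n := ⟨0, by omega⟩ with ha0
  set b0 : Fin n := ⟨1, by omega⟩ with hb0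
  have hab : a0 ≠ b0 := by simp [ha0, hb0, Fin.ext_iff]
  set T : ℝ := ∑ σ : Equiv.Perm (Fin n), H (σ a0) (σ b0) with hT
  set S : ℝ := ∑ i : Fin n, ∑ j : Fin n, (if i ≠ j then H i j else 0) with hS
  -- key: the sum over σ of H (σ a) (σ b) is independent of the distinct pair (a,b)
  have key : ∀ a b : Fin n, a ≠ b →
      (∑ σ : Equiv.Perm (Fin n), H (σ a) (σ b)) = T := by
    intro a b h
    set τ1 := Equiv.swap a0 a with hτ1
    set c := τ1 b0 with hc
    have hac : a ≠ c := by
      intro h'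
      apply hab
      apply τ1.injective
      rw [← hc, ← h']
      exact Equiv.swap_apply_left _ _
    set τ := Equiv.swap c b * τ1 with hτ
    have hτa : τ a0 = a := by
      have : τ1 a0 = a := Equiv.swap_apply_left _ _
      simp only [hτ, Equiv.Perm.mul_apply, this]
      exact Equiv.swap_apply_of_ne_of_ne hac h
    have hτb : τ b0 = b := by
      simp [hτ, ← hc, Equiv.swap_apply_left]
    calc ∑ σ : Equiv.Perm (Fin n), H (σ a) (σ b)
        = ∑ σ : Equiv.Perm (Fin n), H ((σ * τ) a0) ((σ * τ) b0) := by
          simp only [Equiv.Perm.mul_apply, hτa, hτb]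
      _ = T := Fintype.sum_bijective (· * τ) (Group.mulRight_bijective τ)
          _ _ (fun σ => rfl)
  -- reindexing: for each σ, the full double sum is invariant
  have e1 : ∀ σ : Equiv.Perm (Fin n),
      (∑ a : Fin n, ∑ b : Fin n, if a ≠ b then H (σ a) (σ b) else 0) = S := by
    intro σ
    have h1 : ∀ a : Fin n, (∑ b : Fin n, if a ≠ b then H (σ a) (σ b) else 0)
        = ∑ b : Fin n, if σ a ≠ b then H (σ a) b else 0 := by
      intro a
      rw [← Equiv.sum_comp σ (fun b => if σ a ≠ b then H (σ a) b else 0)]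
      refine Finset.sum_congr rfl (fun b _ => ?_)
      simp [σ.injective.ne_iff]
    simp_rw [h1]
    rw [hS]
    exact Equiv.sum_comp σ (fun a => ∑ b : Fin n, if a ≠ b then H a b else 0)
  -- claim 2 : n (n-1) T = n! S
  have claim2 : (n : ℝ) * ((n : ℝ) - 1) * T = (Nat.factorial n : ℝ) * S := by
    have lhs1 : (∑ σ : Equiv.Perm (Fin n),
        ∑ a : Fin n, ∑ b : Fin n, if a ≠ b then H (σ a) (σ b) else 0)
        = (Nat.factorial n : ℝ) * S := by
      simp_rw [e1]
      simp [Finset.sum_const, Fintype.card_perm, nsmul_eq_mul]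
    have swap1 : (∑ σ : Equiv.Perm (Fin n),
        ∑ a : Fin n, ∑ b : Fin n, if a ≠ b then H (σ a) (σ b) else 0)
        = ∑ a : Fin n, ∑ b : Fin n, if a ≠ b then
            (∑ σ : Equiv.Perm (Fin n), H (σ a) (σ b)) else 0 := by
      rw [Finset.sum_comm]
      refine Finset.sum_congr rfl (fun a _ => ?_)
      rw [Finset.sum_comm]
      refine Finset.sum_congr rfl (fun b _ => ?_)
      split_ifs <;> simp
    have e2 : ∀ a : Fin n, (∑ b : Fin n, if a ≠ b then T else 0)
        = ((n : ℝ) - 1) * T := by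
      intro a
      have h3 : ∀ b : Fin n, (if a ≠ b then T else 0)
          = T - (if a = b then T else 0) := by
        intro b; split_ifs with h h' <;> simp_all
      simp_rw [h3, Finset.sum_sub_distrib, Finset.sum_const,
        Finset.sum_ite_eq, Finset.mem_univ, if_true]
      simp [Fintype.card_fin]
      ring
    have : (∑ a : Fin n, ∑ b : Fin n, if a ≠ b then
        (∑ σ : Equiv.Perm (Fin n), H (σ a) (σ b)) else 0)
        = (n : ℝ) * (((n : ℝ) - 1) * T) := by
      have : ∀ a b : Fin n, (if a ≠ b then
          (∑ σ : Equiv.Perm (Fin n), H (σ a) (σ b)) else 0)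
          = (if a ≠ b then T else 0) := by
        intro a b
        split_ifs with h
        · exact key a b h
        · rfl
      simp_rw [this, e2]
      simp [Finset.sum_const, Fintype.card_fin, nsmul_eq_mul]
    rw [← mul_assoc] at this
    rw [← lhs1, swap1, this]
  -- compute the RHS sum
  have rhs1 : (∑ σ : Equiv.Perm (Fin n),
      ∑ i : Fin m, H (σ ⟨2 * i.1, by have := i.isLt; omega⟩)
        (σ ⟨2 * i.1 + 1, by have := i.isLt; omega⟩)) = (m : ℝ) * T := by
    rw [Finset.sum_comm]
    have : ∀ i : Fin m, (∑ σ : Equiv.Perm (Fin n),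
        H (σ ⟨2 * i.1, by have := i.isLt; omega⟩)
          (σ ⟨2 * i.1 + 1, by have := i.isLt; omega⟩)) = T := by
      intro i
      apply key
      simp [Fin.ext_iff]
    simp_rw [this]
    simp [Finset.sum_const, Fintype.card_fin, nsmul_eq_mul]
  have hfact : (Nat.factorial n : ℝ) ≠ 0 := Nat.cast_ne_zero.mpr (Nat.factorial_ne_zero n)
  have hmne : (m : ℝ) ≠ 0 := Nat.cast_ne_zero.mpr (by omega)
  have hnne : (n : ℝ) ≠ 0 := Nat.cast_ne_zero.mpr (by omega)
  have hn1ne : (n : ℝ) - 1 ≠ 0 := by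
    have : (2 : ℝ) ≤ (n : ℝ) := by exact_mod_cast hn
    nlinarith
  rw [← Finset.mul_sum, rhs1]
  rw [show ((n / 2 : ℕ) : ℝ) = (m : ℝ) from rfl]
  field_simp
  nlinarith [claim2]
end

section
/- Decoupling bound for U-statistics of i.i.d. variables: let (X_i)_{i=1..n} be i.i.d. random variables with values in a measurable space, let h ≥ 0 be a symmetric measurable function of two variables, and set W_n = (1/(n(n-1))) Σ_{i≠j} h(X_i, X_j). Then for every δ > 0 and C > 0, P[W_n > δ] ≤ e^{-Cδ} · E[ exp( (C/⌊n/2⌋) h(X₁, X₂) ) ]^{⌊n/2⌋}. -/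
open MeasureTheory ProbabilityTheory
open scoped ENNReal NNReal

private lemma exists_perm_two {α : Type*} [DecidableEq α] {a b c d : α}
    (hab : a ≠ b) (hcd : c ≠ d) : ∃ π : Equiv.Perm α, π a = c ∧ π b = d := by
  refine ⟨(Equiv.swap (Equiv.swap a c b) d) * (Equiv.swap a c), ?_, ?_⟩
  · have h2 : Equiv.swap a c b ≠ c := by
      intro hbc
      exact hab ((Equiv.injective _ (hbc.trans (Equiv.swap_apply_left a c).symm)).symm)
    simp only [Equiv.Perm.mul_apply, Equiv.swap_apply_left]
    exact Equiv.swap_apply_of_ne_of_ne (Ne.symm h2) hcd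
  · simp only [Equiv.Perm.mul_apply]
    exact Equiv.swap_apply_left _ d

private lemma perm_sum_eq {n : ℕ} (g : Fin n → Fin n → ℝ) {u v u' v' : Fin n}
    (huv : u ≠ v) (hu'v' : u' ≠ v') :
    ∑ σ : Equiv.Perm (Fin n), g (σ u) (σ v)
      = ∑ σ : Equiv.Perm (Fin n), g (σ u') (σ v') := by
  obtain ⟨π, hπu, hπv⟩ := exists_perm_two hu'v' huv
  calc ∑ σ : Equiv.Perm (Fin n), g (σ u) (σ v)
      = ∑ σ : Equiv.Perm (Fin n), g ((σ * π) u') ((σ * π) v') := by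
        simp [Equiv.Perm.mul_apply, hπu, hπv]
    _ = ∑ σ : Equiv.Perm (Fin n), g (σ u') (σ v') :=
        Equiv.sum_comp (Equiv.mulRight π) (fun σ => g (σ u') (σ v'))

private lemma ofReal_prod' {ι : Type*} (s : Finset ι) (f : ι → ℝ) (hf : ∀ i ∈ s, 0 ≤ f i) :
    ENNReal.ofReal (∏ i ∈ s, f i) = ∏ i ∈ s, ENNReal.ofReal (f i) := by
  classical
  induction s using Finset.cons_induction with
  | empty => simp
  | cons k s hk ih =>
    rw [Finset.prod_cons, Finset.prod_cons, ENNReal.ofReal_mul (hf k (Finset.mem_cons_self k s)),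
      ih (fun i hi => hf i (Finset.mem_cons_of_mem hi))]

private lemma perm_count {n : ℕ} (g : Fin n → Fin n → ℝ) {u v : Fin n} (huv : u ≠ v) :
    ((n : ℝ) * ((n : ℝ) - 1)) * ∑ σ : Equiv.Perm (Fin n), g (σ u) (σ v)
      = (Fintype.card (Equiv.Perm (Fin n)) : ℝ)
          * ∑ a : Fin n, ∑ b : Fin n, if a ≠ b then g a b else 0 := by
  classical
  set F₀ : ℝ := ∑ σ : Equiv.Perm (Fin n), g (σ u) (σ v) with hF₀
  have step1 : ∑ p : Fin n, ∑ q : Fin n,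
      (if p ≠ q then (∑ σ : Equiv.Perm (Fin n), g (σ p) (σ q)) else 0)
      = ∑ σ : Equiv.Perm (Fin n), ∑ p : Fin n, ∑ q : Fin n,
          (if p ≠ q then g (σ p) (σ q) else 0) := by
    have hite : ∀ p q : Fin n,
        (if p ≠ q then (∑ σ : Equiv.Perm (Fin n), g (σ p) (σ q)) else 0)
        = ∑ σ : Equiv.Perm (Fin n), (if p ≠ q then g (σ p) (σ q) else 0) := by
      intro p q
      split_ifs
      · rfl
      · simp
    simp only [hite]
    rw [show (∑ p : Fin n, ∑ q : Fin n, ∑ σ : Equiv.Perm (Fin n),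
        (if p ≠ q then g (σ p) (σ q) else 0))
        = ∑ p : Fin n, ∑ σ : Equiv.Perm (Fin n), ∑ q : Fin n,
        (if p ≠ q then g (σ p) (σ q) else 0) from
      Finset.sum_congr rfl fun p _ => Finset.sum_comm]
    exact Finset.sum_comm
  have step2 : ∀ σ : Equiv.Perm (Fin n),
      (∑ p : Fin n, ∑ q : Fin n, (if p ≠ q then g (σ p) (σ q) else 0))
      = ∑ a : Fin n, ∑ b : Fin n, if a ≠ b then g a b else 0 := by
    intro σ
    have h1 : ∀ p q : Fin n, (if p ≠ q then g (σ p) (σ q) else 0)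
        = (if σ p ≠ σ q then g (σ p) (σ q) else 0) := by
      intro p q
      simp [EmbeddingLike.apply_eq_iff_eq]
    calc ∑ p : Fin n, ∑ q : Fin n, (if p ≠ q then g (σ p) (σ q) else 0)
        = ∑ p : Fin n, ∑ q : Fin n, (if σ p ≠ σ q then g (σ p) (σ q) else 0) := by
          simp only [h1]
      _ = ∑ a : Fin n, ∑ q : Fin n, (if a ≠ σ q then g a (σ q) else 0) :=
          Equiv.sum_comp σ (fun a => ∑ q : Fin n, (if a ≠ σ q then g a (σ q) else 0))
      _ = ∑ a : Fin n, ∑ b : Fin n, if a ≠ b then g a b else 0 :=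
          Finset.sum_congr rfl fun a _ =>
            Equiv.sum_comp σ (fun b => if a ≠ b then g a b else 0)
  have step3 : ∑ p : Fin n, ∑ q : Fin n,
      (if p ≠ q then (∑ σ : Equiv.Perm (Fin n), g (σ p) (σ q)) else 0)
      = ((n : ℝ) * ((n : ℝ) - 1)) * F₀ := by
    have h1 : ∀ p q : Fin n, (if p ≠ q then (∑ σ : Equiv.Perm (Fin n), g (σ p) (σ q)) else 0)
        = (if p ≠ q then F₀ else 0) := by
      intro p q
      split_ifs with hpq
      · exact perm_sum_eq g hpq huv
      · rfl
    simp only [h1]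
    have h2 : ∀ p : Fin n, (∑ q : Fin n, if p ≠ q then F₀ else 0) = ((n : ℝ) - 1) * F₀ := by
      intro p
      have : ∀ q : Fin n, (if p ≠ q then F₀ else 0) = F₀ - (if p = q then F₀ else 0) := by
        intro q; split_ifs <;> simp_all
      simp only [this, Finset.sum_sub_distrib, Finset.sum_const, Finset.card_univ,
        Fintype.card_fin, Finset.sum_ite_eq, Finset.mem_univ, if_true]
      push_cast
      ring
    simp only [h2, Finset.sum_const, Finset.card_univ, Fintype.card_fin]
    push_cast
    ring
  rw [← step3, step1]
  simp only [step2, Finset.sum_const, Finset.card_univ, nsmul_eq_mul]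

private lemma map_pair_eq {Ω E : Type*} [MeasurableSpace Ω] [MeasurableSpace E]
    (P : Measure Ω) [IsProbabilityMeasure P]
    (X : ℕ → Ω → E) (hXmeas : ∀ i, Measurable (X i))
    (hindep : iIndepFun X P)
    (hid : ∀ i j, Measure.map (X i) P = Measure.map (X j) P)
    {p q : ℕ} (hpq : p ≠ q) (φ : E × E → ℝ≥0∞) (hφ : Measurable φ) :
    ∫⁻ ω, φ (X p ω, X q ω) ∂P = ∫⁻ ω, φ (X 0 ω, X 1 ω) ∂P := by
  have hpair : ∀ (i j : ℕ), i ≠ j → Measure.map (fun ω => (X i ω, X j ω)) P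
      = (Measure.map (X 0) P).prod (Measure.map (X 1) P) := by
    intro i j hij
    rw [(indepFun_iff_map_prod_eq_prod_map_map (hXmeas i).aemeasurable
      (hXmeas j).aemeasurable).1 (hindep.indepFun hij), hid i 0, hid j 1]
  rw [← lintegral_map hφ ((hXmeas p).prodMk (hXmeas q)),
      ← lintegral_map hφ ((hXmeas 0).prodMk (hXmeas 1)),
      hpair p q hpq, hpair 0 1 (by norm_num)]

private lemma lintegral_prod_blocks {Ω E : Type*} [MeasurableSpace Ω] [MeasurableSpace E]
    (P : Measure Ω) [IsProbabilityMeasure P]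
    (X : ℕ → Ω → E) (hXmeas : ∀ i, Measurable (X i))
    (hindep : iIndepFun X P)
    (φ : E × E → ℝ≥0∞) (hφ : Measurable φ) (a b : ℕ → ℕ) (s : Finset ℕ)
    (hdisj : ∀ i ∈ s, ∀ j ∈ s, i ≠ j → Disjoint ({a i, b i} : Finset ℕ) {a j, b j}) :
    ∫⁻ ω, ∏ i ∈ s, φ (X (a i) ω, X (b i) ω) ∂P
      = ∏ i ∈ s, ∫⁻ ω, φ (X (a i) ω, X (b i) ω) ∂P := by
  classical
  induction s using Finset.induction_on with
  | empty => simp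
  | @insert k s hk ih =>
    have hdisj' : ∀ i ∈ s, ∀ j ∈ s, i ≠ j → Disjoint ({a i, b i} : Finset ℕ) {a j, b j} :=
      fun i hi j hj hij => hdisj i (Finset.mem_insert_of_mem hi) j
        (Finset.mem_insert_of_mem hj) hij
    set S : Finset ℕ := {a k, b k} with hS
    set T : Finset ℕ := s.biUnion (fun i => {a i, b i}) with hT
    have hST : Disjoint S T := by
      rw [hT, Finset.disjoint_biUnion_right]
      intro i hi
      exact hdisj k (Finset.mem_insert_self k s) i (Finset.mem_insert_of_mem hi)
        (fun hki => hk (hki ▸ hi))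
    have haS : a k ∈ S := Finset.mem_insert_self _ _
    have hbS : b k ∈ S := Finset.mem_insert_of_mem (Finset.mem_singleton_self _)
    have haT : ∀ i ∈ s, a i ∈ T := fun i hi =>
      Finset.mem_biUnion.mpr ⟨i, hi, Finset.mem_insert_self _ _⟩
    have hbT : ∀ i ∈ s, b i ∈ T := fun i hi =>
      Finset.mem_biUnion.mpr ⟨i, hi, Finset.mem_insert_of_mem (Finset.mem_singleton_self _)⟩
    have base := hindep.indepFun_finset S T hST hXmeas
    set φ₁ : ((i : S) → E) → ℝ≥0∞ := fun t => φ (t ⟨a k, haS⟩, t ⟨b k, hbS⟩) with hφ₁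
    set φ₂ : ((i : T) → E) → ℝ≥0∞ :=
      fun t => ∏ i ∈ s.attach, φ (t ⟨a i, haT i i.2⟩, t ⟨b i, hbT i i.2⟩) with hφ₂
    have hφ₁m : Measurable φ₁ :=
      hφ.comp ((measurable_pi_apply _).prodMk (measurable_pi_apply _))
    have hφ₂m : Measurable φ₂ :=
      Finset.measurable_prod _ fun i _ =>
        hφ.comp ((measurable_pi_apply _).prodMk (measurable_pi_apply _))
    have hIndep : IndepFun (fun ω => φ (X (a k) ω, X (b k) ω))
        (fun ω => ∏ i ∈ s, φ (X (a i) ω, X (b i) ω)) P := by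
      have := base.comp hφ₁m hφ₂m
      have he1 : (φ₁ ∘ fun ω (i : S) => X i ω) = fun ω => φ (X (a k) ω, X (b k) ω) := rfl
      have he2 : (φ₂ ∘ fun ω (i : T) => X i ω)
          = fun ω => ∏ i ∈ s, φ (X (a i) ω, X (b i) ω) := by
        funext ω
        simp only [Function.comp_apply, hφ₂]
        exact Finset.prod_attach s fun i => φ (X (a i) ω, X (b i) ω)
      rwa [he1, he2] at this
    have hm1 : Measurable fun ω => φ (X (a k) ω, X (b k) ω) :=
      hφ.comp ((hXmeas _).prodMk (hXmeas _))
    have hm2 : Measurable fun ω => ∏ i ∈ s, φ (X (a i) ω, X (b i) ω) :=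
      Finset.measurable_prod _ fun i _ => hφ.comp ((hXmeas _).prodMk (hXmeas _))
    calc ∫⁻ ω, ∏ i ∈ insert k s, φ (X (a i) ω, X (b i) ω) ∂P
        = ∫⁻ ω, ((fun ω => φ (X (a k) ω, X (b k) ω))
            * fun ω => ∏ i ∈ s, φ (X (a i) ω, X (b i) ω)) ω ∂P := by
          refine lintegral_congr fun ω => ?_
          simp [Finset.prod_insert hk]
      _ = (∫⁻ ω, φ (X (a k) ω, X (b k) ω) ∂P)
            * ∫⁻ ω, ∏ i ∈ s, φ (X (a i) ω, X (b i) ω) ∂P :=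
          lintegral_mul_eq_lintegral_mul_lintegral_of_indepFun hm1 hm2 hIndep
      _ = ∏ i ∈ insert k s, ∫⁻ ω, φ (X (a i) ω, X (b i) ω) ∂P := by
          rw [ih hdisj', Finset.prod_insert hk]

/-- **Decoupling bound for U-statistics of i.i.d. variables.** For i.i.d. `(X_i)`, a
nonnegative symmetric measurable kernel `h`, and
`W_n = (1/(n(n-1))) ∑_{i≠j} h(X_i, X_j)`, one has for all `δ, C > 0`:
`P[W_n > δ] ≤ e^{-Cδ} E[exp((C/⌊n/2⌋) h(X₁,X₂))]^{⌊n/2⌋}`. -/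
theorem stmt_13 {Ω E : Type*} [MeasurableSpace Ω] [MeasurableSpace E]
    (P : Measure Ω) [IsProbabilityMeasure P]
    (X : ℕ → Ω → E) (hXmeas : ∀ i, Measurable (X i))
    (hindep : iIndepFun X P)
    (hid : ∀ i j, Measure.map (X i) P = Measure.map (X j) P)
    (h : E → E → ℝ) (hmeas : Measurable fun p : E × E => h p.1 p.2)
    (hnonneg : ∀ x y, 0 ≤ h x y) (hsymm : ∀ x y, h x y = h y x)
    (n : ℕ) (hn : 2 ≤ n) (δ C : ℝ) (hδ : 0 < δ) (hC : 0 < C) :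
    P {ω | δ < ((n : ℝ) * ((n : ℝ) - 1))⁻¹ *
        ∑ i ∈ Finset.range n, ∑ j ∈ Finset.range n,
          (if i ≠ j then h (X i ω) (X j ω) else 0)}
      ≤ ENNReal.ofReal (Real.exp (-C * δ)) *
        (∫⁻ ω, ENNReal.ofReal
            (Real.exp (C / ((n / 2 : ℕ) : ℝ) * h (X 0 ω) (X 1 ω))) ∂P) ^ (n / 2 : ℕ) := by
  classical
  set m : ℕ := n / 2 with hmdef
  have hm : 0 < m := Nat.div_pos hn (by norm_num)
  have h2m : 2 * m ≤ n := by
    have := Nat.div_mul_le_self n 2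
    omega
  have hn0 : 0 < n := by omega
  have hnR : (2:ℝ) ≤ (n:ℝ) := by exact_mod_cast hn
  have hnpos : (0:ℝ) < (n:ℝ) * ((n:ℝ) - 1) := by nlinarith
  set K : ℕ := Fintype.card (Equiv.Perm (Fin n)) with hK
  have hKpos : 0 < K := Fintype.card_pos
  have hKR : (0:ℝ) < (K:ℝ) := by exact_mod_cast hKpos
  set pad : ℕ → Fin n := fun k => ⟨k % n, Nat.mod_lt k hn0⟩ with hpaddef
  have hpadval : ∀ k, k < n → ((pad k) : ℕ) = k := fun k hk => Nat.mod_eq_of_lt hk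
  have hpadne : ∀ x y, x < n → y < n → x ≠ y → pad x ≠ pad y := by
    intro x y hx hy hxy hc
    exact hxy (by rw [← hpadval x hx, ← hpadval y hy, hc])
  -- the U-statistic
  set W : Ω → ℝ := fun ω => ((n : ℝ) * ((n : ℝ) - 1))⁻¹ *
        ∑ i ∈ Finset.range n, ∑ j ∈ Finset.range n,
          (if i ≠ j then h (X i ω) (X j ω) else 0) with hWdef
  -- index maps for the blocks
  set a : Equiv.Perm (Fin n) → ℕ → ℕ := fun σ i => ((σ (pad (2*i))) : ℕ) with hadef
  set b : Equiv.Perm (Fin n) → ℕ → ℕ := fun σ i => ((σ (pad (2*i+1))) : ℕ) with hbdef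
  set V : Equiv.Perm (Fin n) → Ω → ℝ := fun σ ω => ((m:ℝ))⁻¹ *
      ∑ i ∈ Finset.range m, h (X (a σ i) ω) (X (b σ i) ω) with hVdef
  have hσne : ∀ (σ : Equiv.Perm (Fin n)) (x y : ℕ), x < n → y < n → x ≠ y →
      ((σ (pad x)) : ℕ) ≠ ((σ (pad y)) : ℕ) := by
    intro σ x y hx hy hxy hc
    exact hpadne x y hx hy hxy (σ.injective (Fin.val_injective hc))
  have hbound : ∀ i ∈ Finset.range m, 2*i+1 < n := by
    intro i hi
    have := Finset.mem_range.mp hi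
    omega
  -- pointwise identity
  have hWV : ∀ ω, W ω = ((K:ℝ))⁻¹ * ∑ σ : Equiv.Perm (Fin n), V σ ω := by
    intro ω
    set g : Fin n → Fin n → ℝ := fun p q => h (X (p:ℕ) ω) (X (q:ℕ) ω) with hg
    have hconv : (∑ i ∈ Finset.range n, ∑ j ∈ Finset.range n,
        (if i ≠ j then h (X i ω) (X j ω) else 0))
        = ∑ p : Fin n, ∑ q : Fin n, (if p ≠ q then g p q else 0) := by
      rw [← Fin.sum_univ_eq_sum_range (fun i => ∑ j ∈ Finset.range n,
        (if i ≠ j then h (X i ω) (X j ω) else 0)) n]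
      refine Finset.sum_congr rfl fun p _ => ?_
      rw [← Fin.sum_univ_eq_sum_range
        (fun j => if (p:ℕ) ≠ j then h (X (p:ℕ) ω) (X j ω) else 0) n]
      refine Finset.sum_congr rfl fun q _ => ?_
      by_cases hpq : p = q
      · simp [hpq]
      · have : (p:ℕ) ≠ (q:ℕ) := fun hc => hpq (Fin.val_injective hc)
        simp [hpq, this, hg]
    have hpad01 : pad 0 ≠ pad 1 := hpadne 0 1 (by omega) (by omega) (by omega)
    set F₀ : ℝ := ∑ σ : Equiv.Perm (Fin n), g (σ (pad 0)) (σ (pad 1)) with hF₀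
    have hsum : ∀ i ∈ Finset.range m,
        (∑ σ : Equiv.Perm (Fin n), g (σ (pad (2*i))) (σ (pad (2*i+1)))) = F₀ := by
      intro i hi
      exact perm_sum_eq g
        (hpadne (2*i) (2*i+1) (by have := hbound i hi; omega) (hbound i hi) (by omega)) hpad01
    have hVsum : (∑ σ : Equiv.Perm (Fin n), V σ ω) = F₀ := by
      simp only [hVdef]
      rw [← Finset.mul_sum, Finset.sum_comm]
      have : ∀ i ∈ Finset.range m,
          (∑ σ : Equiv.Perm (Fin n), h (X (a σ i) ω) (X (b σ i) ω)) = F₀ := by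
        intro i hi
        exact hsum i hi
      rw [Finset.sum_congr rfl this, Finset.sum_const, Finset.card_range, nsmul_eq_mul]
      field_simp
    have hcount := perm_count g hpad01
    simp only [hWdef]
    rw [hconv, hVsum]
    have hKne : (K:ℝ) ≠ 0 := ne_of_gt hKR
    have hnne : (n:ℝ) * ((n:ℝ)-1) ≠ 0 := ne_of_gt hnpos
    rw [← hF₀, ← hK] at hcount
    simp only [ne_eq, ite_not] at hcount ⊢
    have hn1 : (n:ℝ) - 1 ≠ 0 := by linarith
    field_simp
    linarith [hcount]
  -- measurability
  have hWmeas : Measurable W := by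
    apply Measurable.const_mul
    apply Finset.measurable_sum
    intro i _
    apply Finset.measurable_sum
    intro j _
    by_cases hij : i ≠ j
    · simpa [hij, Function.comp_def] using hmeas.comp ((hXmeas i).prodMk (hXmeas j))
    · simp [hij]
  have hVmeas : ∀ σ, Measurable (V σ) := by
    intro σ
    apply Measurable.const_mul
    exact Finset.measurable_sum _ fun i _ => hmeas.comp ((hXmeas _).prodMk (hXmeas _))
  -- Markov
  set ε : ℝ≥0∞ := ENNReal.ofReal (Real.exp (C * δ)) with hε
  have hεpos : 0 < ε := ENNReal.ofReal_pos.mpr (Real.exp_pos _)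
  have hεtop : ε ≠ ⊤ := ENNReal.ofReal_ne_top
  set f : Ω → ℝ≥0∞ := fun ω => ENNReal.ofReal (Real.exp (C * W ω)) with hf
  have hfmeas : Measurable f :=
    ENNReal.measurable_ofReal.comp (Real.measurable_exp.comp (hWmeas.const_mul C))
  have markov : ε * P {ω | δ < W ω} ≤ ∫⁻ ω, f ω ∂P := by
    have hsubset : {ω | δ < W ω} ⊆ {ω | ε ≤ f ω} := by
      intro ω hω
      exact ENNReal.ofReal_le_ofReal (Real.exp_le_exp.mpr
        (mul_le_mul_of_nonneg_left (le_of_lt hω) hC.le))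
    exact le_trans (mul_le_mul_right (measure_mono hsubset) ε)
      (mul_meas_ge_le_lintegral₀ hfmeas.aemeasurable ε)
    -- kernel factor
  set φ : E × E → ℝ≥0∞ := fun z => ENNReal.ofReal (Real.exp (C / (m:ℝ) * h z.1 z.2)) with hφdef
  have hφm : Measurable φ :=
    ENNReal.measurable_ofReal.comp (Real.measurable_exp.comp (hmeas.const_mul (C / (m:ℝ))))
  set r : ℝ≥0∞ :=
    ∫⁻ ω, ENNReal.ofReal (Real.exp (C / (m:ℝ) * h (X 0 ω) (X 1 ω))) ∂P with hr
  -- per-σ integral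
  have hprodσ : ∀ σ : Equiv.Perm (Fin n),
      ∫⁻ ω, ENNReal.ofReal (Real.exp (C * V σ ω)) ∂P = r ^ m := by
    intro σ
    have hexp : ∀ ω, ENNReal.ofReal (Real.exp (C * V σ ω))
        = ∏ i ∈ Finset.range m, φ (X (a σ i) ω, X (b σ i) ω) := by
      intro ω
      have h1 : C * V σ ω
          = ∑ i ∈ Finset.range m, C / (m:ℝ) * h (X (a σ i) ω) (X (b σ i) ω) := by
        simp only [hVdef]
        rw [show C * (((m:ℝ))⁻¹ * ∑ i ∈ Finset.range m, h (X (a σ i) ω) (X (b σ i) ω))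
          = (C/(m:ℝ)) * ∑ i ∈ Finset.range m, h (X (a σ i) ω) (X (b σ i) ω) by ring,
          Finset.mul_sum]
      rw [h1, Real.exp_sum, ofReal_prod' _ _ (fun i _ => (Real.exp_pos _).le)]
    have hdisj : ∀ i ∈ Finset.range m, ∀ j ∈ Finset.range m, i ≠ j →
        Disjoint ({a σ i, b σ i} : Finset ℕ) {a σ j, b σ j} := by
      intro i hi j hj hij
      have hi1 := hbound i hi
      have hj1 := hbound j hj
      rw [Finset.disjoint_left]
      intro x hx hx'
      simp only [Finset.mem_insert, Finset.mem_singleton, hadef, hbdef] at hx hx'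
      rcases hx with rfl | rfl <;> rcases hx' with hc | hc <;>
        exact hσne σ _ _ (by omega) (by omega) (by omega) hc
    calc ∫⁻ ω, ENNReal.ofReal (Real.exp (C * V σ ω)) ∂P
        = ∫⁻ ω, ∏ i ∈ Finset.range m, φ (X (a σ i) ω, X (b σ i) ω) ∂P :=
          lintegral_congr hexp
      _ = ∏ i ∈ Finset.range m, ∫⁻ ω, φ (X (a σ i) ω, X (b σ i) ω) ∂P :=
          lintegral_prod_blocks P X hXmeas hindep φ hφm _ _ _ hdisj
      _ = ∏ _i ∈ Finset.range m, r := by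
          refine Finset.prod_congr rfl fun i hi => ?_
          have hab : a σ i ≠ b σ i :=
            hσne σ _ _ (by have := hbound i hi; omega) (hbound i hi) (by omega)
          exact map_pair_eq P X hXmeas hindep hid hab φ hφm
      _ = r ^ m := by rw [Finset.prod_const, Finset.card_range]
  -- Jensen
  have hsum1 : ∑ _σ : Equiv.Perm (Fin n), ((K:ℝ))⁻¹ = 1 := by
    rw [Finset.sum_const, Finset.card_univ, ← hK, nsmul_eq_mul]
    field_simp
  have hJ : ∀ ω, f ω ≤ ∑ σ : Equiv.Perm (Fin n),
      ENNReal.ofReal (((K:ℝ))⁻¹ * Real.exp (C * V σ ω)) := by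
    intro ω
    have h1 : C * W ω = ∑ σ : Equiv.Perm (Fin n), ((K:ℝ))⁻¹ • (C * V σ ω) := by
      rw [hWV ω]
      simp only [hVdef, smul_eq_mul, ← Finset.mul_sum]
      ring
    have h2 := convexOn_exp.map_sum_le (t := Finset.univ)
      (w := fun _ : Equiv.Perm (Fin n) => ((K:ℝ))⁻¹) (p := fun σ => C * V σ ω)
      (fun _ _ => by positivity) hsum1 (fun _ _ => Set.mem_univ _)
    calc f ω = ENNReal.ofReal (Real.exp (C * W ω)) := rfl
      _ ≤ ENNReal.ofReal (∑ σ : Equiv.Perm (Fin n),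
            ((K:ℝ))⁻¹ * Real.exp (C * V σ ω)) := by
          apply ENNReal.ofReal_le_ofReal
          rw [h1]
          simpa [smul_eq_mul] using h2
      _ = ∑ σ : Equiv.Perm (Fin n),
            ENNReal.ofReal (((K:ℝ))⁻¹ * Real.exp (C * V σ ω)) :=
          ENNReal.ofReal_sum_of_nonneg (fun σ _ => by positivity)
  have hVexpmeas : ∀ σ : Equiv.Perm (Fin n),
      Measurable fun ω => ENNReal.ofReal (Real.exp (C * V σ ω)) := fun σ =>
    ENNReal.measurable_ofReal.comp (Real.measurable_exp.comp ((hVmeas σ).const_mul C))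
  have hstep : ∫⁻ ω, f ω ∂P ≤ r ^ m := by
    calc ∫⁻ ω, f ω ∂P
        ≤ ∫⁻ ω, ∑ σ : Equiv.Perm (Fin n),
            ENNReal.ofReal (((K:ℝ))⁻¹ * Real.exp (C * V σ ω)) ∂P := lintegral_mono hJ
      _ = ∑ σ : Equiv.Perm (Fin n), ∫⁻ ω,
            ENNReal.ofReal (((K:ℝ))⁻¹ * Real.exp (C * V σ ω)) ∂P :=
          lintegral_finset_sum _ (fun σ _ => ENNReal.measurable_ofReal.comp
            ((Real.measurable_exp.comp ((hVmeas σ).const_mul C)).const_mul _))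
      _ = ∑ _σ : Equiv.Perm (Fin n), ENNReal.ofReal (((K:ℝ))⁻¹) * r ^ m := by
          refine Finset.sum_congr rfl fun σ _ => ?_
          rw [← hprodσ σ,
            show (fun ω => ENNReal.ofReal (((K:ℝ))⁻¹ * Real.exp (C * V σ ω)))
              = fun ω => ENNReal.ofReal (((K:ℝ))⁻¹)
                  * ENNReal.ofReal (Real.exp (C * V σ ω)) from
              funext fun ω => ENNReal.ofReal_mul (by positivity)]
          exact lintegral_const_mul _ (hVexpmeas σ)
      _ = (K : ℝ≥0∞) * (ENNReal.ofReal (((K:ℝ))⁻¹) * r ^ m) := by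
          rw [Finset.sum_const, Finset.card_univ, ← hK, nsmul_eq_mul]
      _ = r ^ m := by
          rw [← mul_assoc,
            show ((K:ℕ) : ℝ≥0∞) * ENNReal.ofReal (((K:ℝ))⁻¹) = 1 by
              rw [show ((K:ℕ) : ℝ≥0∞) = ENNReal.ofReal ((K:ℝ)) from
                  (ENNReal.ofReal_natCast K).symm,
                ← ENNReal.ofReal_mul (by positivity), mul_inv_cancel₀ (ne_of_gt hKR),
                ENNReal.ofReal_one],
            one_mul]
  have hinv : ENNReal.ofReal (Real.exp (-C * δ)) = ε⁻¹ := by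
    rw [hε, ← ENNReal.ofReal_inv_of_pos (Real.exp_pos _), ← Real.exp_neg, neg_mul]
  calc P {ω | δ < W ω}
      = ε⁻¹ * (ε * P {ω | δ < W ω}) := by
        rw [← mul_assoc, ENNReal.inv_mul_cancel (ne_of_gt hεpos) hεtop, one_mul]
    _ ≤ ε⁻¹ * r ^ m := mul_le_mul_right (le_trans markov hstep) _
    _ = ENNReal.ofReal (Real.exp (-C * δ)) * r ^ m := by rw [hinv]
end

section
/- Exponential tightness is preserved under exponential tilting: let E be a regular Hausdorff space, (μ_n) exponentially tight probability measures on E, φ : E → ℝ measurable with limsup_n (1/n) log ∫ e^{nγφ} dμ_n < ∞ for some γ > 1, and limsup_n -(1/n) log Z_n < ∞ where Z_n = ∫ e^{nφ} dμ_n. Then the tilted measures ν_n = Z_n⁻¹ e^{nφ} μ_n are exponentially tight: for every M > 0 there exists a compact set K with limsup_n (1/n) log ν_n(K^c) < -M. -/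
open MeasureTheory Filter Topology
open scoped ENNReal NNReal


lemma aux_of_log_le {n : ℕ} (hn : 1 ≤ n) {x : ℝ≥0∞} {c : ℝ}
    (h : (((n : ℝ)⁻¹ : ℝ) : EReal) * ENNReal.log x ≤ (c : EReal)) :
    x ≤ ENNReal.ofReal (Real.exp ((n : ℝ) * c)) := by
  have hn0 : (n : ℝ) ≠ 0 := Nat.cast_ne_zero.mpr (by omega)
  have h2 := mul_le_mul_of_nonneg_left h
    (show (0:EReal) ≤ (((n : ℝ) : ℝ) : EReal) from EReal.coe_nonneg.mpr (Nat.cast_nonneg n))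
  rw [← mul_assoc, ← EReal.coe_mul, mul_inv_cancel₀ hn0, EReal.coe_one, one_mul,
    ← EReal.coe_mul] at h2
  rw [← ENNReal.log_le_log_iff, ENNReal.log_ofReal_of_pos (Real.exp_pos _), Real.log_exp]
  exact h2

lemma aux_log_le {n : ℕ} (hn : 1 ≤ n) {x : ℝ≥0∞} {c : ℝ}
    (h : x ≤ ENNReal.ofReal (Real.exp ((n : ℝ) * c))) :
    (((n : ℝ)⁻¹ : ℝ) : EReal) * ENNReal.log x ≤ (c : EReal) := by
  have hn0 : (n : ℝ) ≠ 0 := Nat.cast_ne_zero.mpr (by omega)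
  have h1 : ENNReal.log x ≤ (((n:ℝ) * c : ℝ) : EReal) := by
    rw [← Real.log_exp ((n:ℝ)*c), ← ENNReal.log_ofReal_of_pos (Real.exp_pos _)]
    exact ENNReal.log_le_log_iff.mpr h
  have h2 := mul_le_mul_of_nonneg_left h1
    (show (0:EReal) ≤ (((n : ℝ)⁻¹ : ℝ) : EReal) from
      EReal.coe_nonneg.mpr (inv_nonneg.mpr (Nat.cast_nonneg n)))
  rwa [← EReal.coe_mul, ← mul_assoc, inv_mul_cancel₀ hn0, one_mul] at h2

lemma aux_holder {E : Type*} [MeasurableSpace E] (μ : Measure E) {s : Set E}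
    (hs : MeasurableSet s) (φ : E → ℝ) (hφ : Measurable φ) {γ : ℝ} (hγ : 1 < γ) (n : ℕ) :
    ∫⁻ x in s, ENNReal.ofReal (Real.exp ((n:ℝ) * φ x)) ∂μ ≤
      (μ s) ^ (1 - γ⁻¹) *
      (∫⁻ x, ENNReal.ofReal (Real.exp ((n:ℝ) * γ * φ x)) ∂μ) ^ γ⁻¹ := by
  set p := Real.conjExponent γ with hp
  have hpq : p.HolderConjugate γ := (Real.HolderConjugate.conjExponent hγ).symm
  have hpinv : 1 / p = 1 - γ⁻¹ := by
    rw [one_div, eq_sub_iff_add_eq]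
    exact hpq.inv_add_inv_eq_one
  set f : E → ℝ≥0∞ := s.indicator 1 with hf
  set g : E → ℝ≥0∞ := fun x => ENNReal.ofReal (Real.exp ((n:ℝ) * φ x)) with hg
  have hgm : Measurable g := ((measurable_const.mul hφ).exp).ennreal_ofReal
  have hfm : Measurable f := (measurable_const.indicator hs)
  have h1 : ∫⁻ x in s, g x ∂μ = ∫⁻ x, (f * g) x ∂μ := by
    rw [← lintegral_indicator hs]
    refine lintegral_congr fun x => ?_
    by_cases hx : x ∈ s <;> simp [hf, Set.indicator_apply, hx]
  have h2 := ENNReal.lintegral_mul_le_Lp_mul_Lq μ hpq hfm.aemeasurable hgm.aemeasurable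
  have h3 : ∫⁻ x, f x ^ p ∂μ = μ s := by
    have : ∀ x, f x ^ p = f x := by
      intro x
      by_cases hx : x ∈ s <;>
        simp [hf, Set.indicator_apply, hx, ENNReal.one_rpow, ENNReal.zero_rpow_of_pos hpq.pos]
    simp_rw [this]
    rw [hf, lintegral_indicator_one hs]
  have h4 : ∫⁻ x, g x ^ γ ∂μ = ∫⁻ x, ENNReal.ofReal (Real.exp ((n:ℝ) * γ * φ x)) ∂μ := by
    refine lintegral_congr fun x => ?_
    rw [hg]
    simp only
    rw [ENNReal.ofReal_rpow_of_pos (Real.exp_pos _), ← Real.exp_mul]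
    ring_nf
  rw [h1]
  calc ∫⁻ x, (f * g) x ∂μ ≤ (∫⁻ x, f x ^ p ∂μ) ^ (1/p) * (∫⁻ x, g x ^ γ ∂μ) ^ (1/γ) := h2
    _ = (μ s) ^ (1 - γ⁻¹) * (∫⁻ x, ENNReal.ofReal (Real.exp ((n:ℝ) * γ * φ x)) ∂μ) ^ γ⁻¹ := by
        rw [h3, h4, hpinv, one_div]

/-- **Exponential tightness is preserved under exponential tilting.** On a regular Hausdorff
space, if `(μ_n)` is exponentially tight, `φ` is measurable with an exponential moment
condition for some `γ > 1`, and `limsup -(1/n) log Z_n < ∞`, then the tilted measures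
`ν_n = Z_n⁻¹ e^{nφ} μ_n` are exponentially tight. -/
theorem stmt_15 {E : Type*} [TopologicalSpace E] [T2Space E] [RegularSpace E]
    [MeasurableSpace E] [BorelSpace E]
    (μ : ℕ → Measure E) (hprob : ∀ n, IsProbabilityMeasure (μ n))
    (htight : ∀ M : ℝ, 0 < M → ∃ K : Set E, IsCompact K ∧
      limsup (fun n : ℕ => (((n : ℝ)⁻¹ : ℝ) : EReal) * ENNReal.log (μ n Kᶜ)) atTop
        < ((-M : ℝ) : EReal))
    (φ : E → ℝ) (hφ : Measurable φ) (γ : ℝ) (hγ : 1 < γ)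
    (hint : limsup (fun n : ℕ => (((n : ℝ)⁻¹ : ℝ) : EReal) *
        ENNReal.log (∫⁻ x, ENNReal.ofReal (Real.exp ((n : ℝ) * γ * φ x)) ∂(μ n))) atTop < ⊤)
    (hZ : limsup (fun n : ℕ => -((((n : ℝ)⁻¹ : ℝ) : EReal) *
        ENNReal.log (∫⁻ x, ENNReal.ofReal (Real.exp ((n : ℝ) * φ x)) ∂(μ n)))) atTop < ⊤) :
    let Z : ℕ → ℝ≥0∞ := fun n => ∫⁻ x, ENNReal.ofReal (Real.exp ((n : ℝ) * φ x)) ∂(μ n)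
    let ν : ℕ → Measure E := fun n =>
      (Z n)⁻¹ • (μ n).withDensity fun x => ENNReal.ofReal (Real.exp ((n : ℝ) * φ x))
    ∀ M : ℝ, 0 < M → ∃ K : Set E, IsCompact K ∧
      limsup (fun n : ℕ => (((n : ℝ)⁻¹ : ℝ) : EReal) * ENNReal.log (ν n Kᶜ)) atTop
        < ((-M : ℝ) : EReal) := by
  intro Z ν M hM
  obtain ⟨A0, hA0, -⟩ := EReal.exists_between_coe_real hZ
  obtain ⟨B0, hB0, -⟩ := EReal.exists_between_coe_real hint
  set A := max A0 0 with hAdef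
  set B := max B0 0 with hBdef
  have hA0le : (0:ℝ) ≤ A := le_max_right _ _
  have hB0le : (0:ℝ) ≤ B := le_max_right _ _
  have hγ0 : 0 < γ := lt_trans one_pos hγ
  have hδ : 0 < 1 - γ⁻¹ := by
    rw [sub_pos]; exact inv_lt_one_of_one_lt₀ hγ
  set M' := (A + B * γ⁻¹ + M + 1) / (1 - γ⁻¹) with hM'def
  have hBγ : 0 ≤ B * γ⁻¹ := mul_nonneg hB0le (by positivity)
  have hM'pos : 0 < M' := div_pos (by linarith) hδ
  obtain ⟨K, hKcomp, hKlim⟩ := htight M' hM'pos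
  have hKc : MeasurableSet Kᶜ := hKcomp.isClosed.measurableSet.compl
  refine ⟨K, hKcomp, ?_⟩
  have hAev := eventually_lt_of_limsup_lt hA0
  have hBev := eventually_lt_of_limsup_lt hB0
  have hKev := eventually_lt_of_limsup_lt hKlim
  have key : ∀ᶠ n : ℕ in atTop,
      (((n : ℝ)⁻¹ : ℝ) : EReal) * ENNReal.log (ν n Kᶜ) ≤ ((-(M+1) : ℝ) : EReal) := by
    filter_upwards [hAev, hBev, hKev, eventually_ge_atTop 1] with n hA' hB' hK' hn1
    have hZb : (Z n)⁻¹ ≤ ENNReal.ofReal (Real.exp ((n:ℝ) * A)) := by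
      apply aux_of_log_le hn1
      rw [ENNReal.log_inv, mul_neg]
      exact le_trans hA'.le (EReal.coe_le_coe_iff.mpr (le_max_left _ _))
    have hIb : (∫⁻ x, ENNReal.ofReal (Real.exp ((n : ℝ) * γ * φ x)) ∂(μ n))
        ≤ ENNReal.ofReal (Real.exp ((n:ℝ) * B)) := by
      apply aux_of_log_le hn1
      exact le_trans hB'.le (EReal.coe_le_coe_iff.mpr (le_max_left _ _))
    have hKb : μ n Kᶜ ≤ ENNReal.ofReal (Real.exp ((n:ℝ) * (-M'))) := by
      apply aux_of_log_le hn1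
      exact hK'.le
    have hν : ν n Kᶜ ≤ ENNReal.ofReal (Real.exp ((n:ℝ) * (-(M+1)))) := by
      have h1 : ν n Kᶜ = (Z n)⁻¹ * ∫⁻ x in Kᶜ, ENNReal.ofReal (Real.exp ((n:ℝ) * φ x)) ∂(μ n) := by
        simp [ν, Measure.smul_apply, withDensity_apply _ hKc, smul_eq_mul]
      rw [h1]
      calc (Z n)⁻¹ * ∫⁻ x in Kᶜ, ENNReal.ofReal (Real.exp ((n:ℝ) * φ x)) ∂(μ n)
          ≤ ENNReal.ofReal (Real.exp ((n:ℝ) * A)) *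
            ((μ n Kᶜ) ^ (1 - γ⁻¹) *
              (∫⁻ x, ENNReal.ofReal (Real.exp ((n:ℝ) * γ * φ x)) ∂(μ n)) ^ γ⁻¹) :=
            mul_le_mul' hZb (aux_holder (μ n) hKc φ hφ hγ n)
        _ ≤ ENNReal.ofReal (Real.exp ((n:ℝ) * A)) *
            ((ENNReal.ofReal (Real.exp ((n:ℝ) * (-M')))) ^ (1 - γ⁻¹) *
              (ENNReal.ofReal (Real.exp ((n:ℝ) * B))) ^ γ⁻¹) :=
            mul_le_mul' le_rfl (mul_le_mul' (ENNReal.rpow_le_rpow hKb hδ.le)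
              (ENNReal.rpow_le_rpow hIb (by positivity)))
        _ = ENNReal.ofReal (Real.exp ((n:ℝ) * (-(M+1)))) := by
            rw [ENNReal.ofReal_rpow_of_pos (Real.exp_pos _),
              ENNReal.ofReal_rpow_of_pos (Real.exp_pos _), ← Real.exp_mul, ← Real.exp_mul,
              ← ENNReal.ofReal_mul (Real.exp_pos _).le, ← ENNReal.ofReal_mul (Real.exp_pos _).le,
              ← Real.exp_add, ← Real.exp_add]
            congr 1
            rw [Real.exp_eq_exp]
            have h3 : M' * (1 - γ⁻¹) = A + B * γ⁻¹ + M + 1 := div_mul_cancel₀ _ hδ.ne'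
            linear_combination (-(n:ℝ)) * h3
    exact aux_log_le hn1 hν
  refine lt_of_le_of_lt (limsup_le_of_le (by isBoundedDefault) key) ?_
  exact EReal.coe_lt_coe_iff.mpr (by linarith)
end
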